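/- Let G be any finite simple graph and W, W' distinct stable sets of G. If conv({ρ(W), ρ(W')}) is an edge of Stab(G), then the induced subgraph of G on W △ W' is connected. -/

import Mathlib

open Set

variable {V : Type*} [Fintype V]

/-- A stable (independent) set of a graph. -/
def IsStable (G : SimpleGraph V) (W : Set V) : Prop := ∀ a ∈ W, ∀ b ∈ W, ¬ G.Adj a b

/-- The indicator vector of a subset. -/
noncomputable def rho (W : Set V) : V → ℝ := W.indicator 1

/-- The stable set polytope of a graph. -/
noncomputable def stabPolytope (G : SimpleGraph V) : Set (V → ℝ) :=
  convexHull ℝ {x | ∃ W : Set V, IsStable G W ∧ x = rho W}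

/-- `conv {v, w}` is an edge (1-dimensional face) of the polytope `P`. -/
def IsEdgeOf (P : Set (V → ℝ)) (v w : V → ℝ) : Prop :=
  v ≠ w ∧ IsExtreme ℝ P (segment ℝ v w)

/-- A graph is perfect if every induced subgraph has chromatic number equal to clique number. -/
def IsPerfect (G : SimpleGraph V) : Prop :=
  ∀ s : Set V, (G.induce s).chromaticNumber = ((G.induce s).cliqueNum : ℕ∞)

/-- The induced subgraph on `S` is a connected bipartite graph. -/
def ConnBipartiteIn (G : SimpleGraph V) (S : Set V) : Prop :=
  (G.induce S).Connected ∧ (G.induce S).Colorable 2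

/-- The symmetric difference of two sets. -/
def sd (W W' : Set V) : Set V := (W \ W') ∪ (W' \ W)

lemma mem_sd {W W' : Set V} {x : V} :
    x ∈ sd W W' ↔ (x ∈ W ∧ x ∉ W') ∨ (x ∈ W' ∧ x ∉ W) := by
  simp [sd, Set.mem_union, Set.mem_diff]

lemma sd_comm (W W' : Set V) : sd W W' = sd W' W := Set.union_comm _ _

lemma rho_apply_mem {W : Set V} {x : V} (h : x ∈ W) : rho W x = 1 :=
  Set.indicator_of_mem h 1

lemma rho_apply_not_mem {W : Set V} {x : V} (h : x ∉ W) : rho W x = 0 :=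
  Set.indicator_of_notMem h 1

lemma rho_inj {W W' : Set V} (h : rho W = rho W') : W = W' := by
  ext x
  have hx := congrFun h x
  by_cases h1 : x ∈ W <;> by_cases h2 : x ∈ W'
  · simp [h1, h2]
  · rw [rho_apply_mem h1, rho_apply_not_mem h2] at hx; norm_num at hx
  · rw [rho_apply_not_mem h1, rho_apply_mem h2] at hx; norm_num at hx
  · simp [h1, h2]

lemma stable_symmDiff (G : SimpleGraph V) {W W' A : Set V}
    (hW : IsStable G W) (hW' : IsStable G W') (hA : A ⊆ sd W W')
    (hsep : ∀ a ∈ A, ∀ b ∈ sd W W', b ∉ A → ¬ G.Adj a b) :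
    IsStable G (symmDiff W A) := by
  intro a ha b hb hadj
  rw [Set.mem_symmDiff] at ha hb
  rcases ha with ⟨haW, haA⟩ | ⟨haA, haW⟩ <;> rcases hb with ⟨hbW, hbA⟩ | ⟨hbA, hbW⟩
  · exact hW a haW b hbW hadj
  · -- a ∈ W \ A, b ∈ A \ W, so b ∈ W'
    have hbW' : b ∈ W' := ((mem_sd.mp (hA hbA)).resolve_left (fun h => hbW h.1)).1
    by_cases haW' : a ∈ W'
    · exact hW' a haW' b hbW' hadj
    · exact hsep b hbA a (mem_sd.mpr (Or.inl ⟨haW, haW'⟩)) haA hadj.symm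
  · have haW' : a ∈ W' := ((mem_sd.mp (hA haA)).resolve_left (fun h => haW h.1)).1
    by_cases hbW' : b ∈ W'
    · exact hW' a haW' b hbW' hadj
    · exact hsep a haA b (mem_sd.mpr (Or.inl ⟨hbW, hbW'⟩)) hbA hadj
  · have haW' : a ∈ W' := ((mem_sd.mp (hA haA)).resolve_left (fun h => haW h.1)).1
    have hbW' : b ∈ W' := ((mem_sd.mp (hA hbA)).resolve_left (fun h => hbW h.1)).1
    exact hW' a haW' b hbW' hadj

theorem stable_edge_connected (G : SimpleGraph V) (W W' : Set V)
    (hW : IsStable G W) (hW' : IsStable G W') (hne : W ≠ W')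
    (hedge : IsEdgeOf (stabPolytope G) (rho W) (rho W')) :
    (G.induce (sd W W')).Connected := by
  classical
  set S := sd W W' with hSdef
  have hSne : S.Nonempty := by
    by_contra h
    rw [Set.not_nonempty_iff_eq_empty] at h
    apply hne
    ext x
    have hx : x ∉ S := h ▸ Set.notMem_empty x
    rw [hSdef, mem_sd] at hx
    push_neg at hx
    constructor
    · intro hxW; by_contra hxW'; exact hxW' (hx.1 hxW)
    · intro hxW'; by_contra hxW; exact hxW (hx.2 hxW')
  rw [SimpleGraph.connected_iff]
  refine ⟨?_, ⟨⟨hSne.choose, hSne.choose_spec⟩⟩⟩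
  by_contra hpc
  simp only [SimpleGraph.Preconnected] at hpc
  push_neg at hpc
  obtain ⟨u, v, huv⟩ := hpc
  set A : Set V := {x | ∃ hx : x ∈ S, (G.induce S).Reachable u ⟨x, hx⟩} with hAdef
  have hAS : A ⊆ S := fun x hx => hx.1
  have huA : (u : V) ∈ A := ⟨u.2, SimpleGraph.Reachable.refl u⟩
  have hvA : (v : V) ∉ A := fun h => huv h.2
  have hsep : ∀ a ∈ A, ∀ b ∈ S, b ∉ A → ¬ G.Adj a b := by
    rintro a ⟨ha, hra⟩ b hb hbA hadj
    exact hbA ⟨hb, hra.trans (SimpleGraph.Adj.reachable (by exact hadj))⟩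
  set W₁ := symmDiff W A with hW₁def
  set W₂ := symmDiff W' A with hW₂def
  have hst₁ : IsStable G W₁ := stable_symmDiff G hW hW' hAS hsep
  have hst₂ : IsStable G W₂ := by
    apply stable_symmDiff G hW' hW
    · rw [← sd_comm]; exact hAS
    · rw [← sd_comm]; exact hsep
  have hident : ∀ x, rho W x + rho W' x = rho W₁ x + rho W₂ x := by
    intro x
    by_cases hxA : x ∈ A
    · have hxS := hAS hxA
      rw [hSdef, mem_sd] at hxS
      rcases hxS with ⟨hxW, hxW'⟩ | ⟨hxW', hxW⟩
      · have h1 : x ∉ W₁ := by rw [hW₁def, Set.mem_symmDiff]; tauto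
        have h2 : x ∈ W₂ := by rw [hW₂def, Set.mem_symmDiff]; tauto
        rw [rho_apply_mem hxW, rho_apply_not_mem hxW',
          rho_apply_not_mem h1, rho_apply_mem h2]
        ring
      · have h1 : x ∈ W₁ := by rw [hW₁def, Set.mem_symmDiff]; tauto
        have h2 : x ∉ W₂ := by rw [hW₂def, Set.mem_symmDiff]; tauto
        rw [rho_apply_not_mem hxW, rho_apply_mem hxW',
          rho_apply_mem h1, rho_apply_not_mem h2]
        ring
    · have h1 : x ∈ W₁ ↔ x ∈ W := by rw [hW₁def, Set.mem_symmDiff]; tauto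
      have h2 : x ∈ W₂ ↔ x ∈ W' := by rw [hW₂def, Set.mem_symmDiff]; tauto
      by_cases hxW : x ∈ W <;> by_cases hxW' : x ∈ W' <;>
        [ (rw [rho_apply_mem hxW, rho_apply_mem hxW',
            rho_apply_mem (h1.mpr hxW), rho_apply_mem (h2.mpr hxW')]);
          (rw [rho_apply_mem hxW, rho_apply_not_mem hxW',
            rho_apply_mem (h1.mpr hxW), rho_apply_not_mem (fun h => hxW' (h2.mp h))]);
          (rw [rho_apply_not_mem hxW, rho_apply_mem hxW',
            rho_apply_not_mem (fun h => hxW (h1.mp h)), rho_apply_mem (h2.mpr hxW')]);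
          (rw [rho_apply_not_mem hxW, rho_apply_not_mem hxW',
            rho_apply_not_mem (fun h => hxW (h1.mp h)),
            rho_apply_not_mem (fun h => hxW' (h2.mp h))])]
  have hP₁ : rho W₁ ∈ stabPolytope G := subset_convexHull ℝ _ ⟨W₁, hst₁, rfl⟩
  have hP₂ : rho W₂ ∈ stabPolytope G := subset_convexHull ℝ _ ⟨W₂, hst₂, rfl⟩
  set m : V → ℝ := (1/2 : ℝ) • rho W + (1/2 : ℝ) • rho W' with hmdef
  have hm_seg : m ∈ segment ℝ (rho W) (rho W') :=
    ⟨1/2, 1/2, by norm_num, by norm_num, by norm_num, rfl⟩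
  have hm_open : m ∈ openSegment ℝ (rho W₁) (rho W₂) := by
    refine ⟨1/2, 1/2, by norm_num, by norm_num, by norm_num, ?_⟩
    funext x
    have := hident x
    simp only [hmdef, Pi.add_apply, Pi.smul_apply, smul_eq_mul]
    linarith
  have h₁ : rho W₁ ∈ segment ℝ (rho W) (rho W') :=
    hedge.2.2 hP₁ hP₂ hm_seg hm_open
  obtain ⟨a, b, ha0, hb0, hab, heq⟩ := h₁
  have hequ := congrFun heq (u : V)
  simp only [Pi.add_apply, Pi.smul_apply, smul_eq_mul] at hequ
  have huS := mem_sd.mp (hAS huA)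
  have hW₁W' : rho W₁ = rho W' := by
    rcases huS with ⟨hxW, hxW'⟩ | ⟨hxW', hxW⟩
    · have h1 : (u : V) ∉ W₁ := by rw [hW₁def, Set.mem_symmDiff]; tauto
      rw [rho_apply_mem hxW, rho_apply_not_mem hxW', rho_apply_not_mem h1] at hequ
      have ha : a = 0 := by linarith
      have hb : b = 1 := by linarith
      rw [ha, hb] at heq
      simpa using heq.symm
    · have h1 : (u : V) ∈ W₁ := by rw [hW₁def, Set.mem_symmDiff]; tauto
      rw [rho_apply_not_mem hxW, rho_apply_mem hxW', rho_apply_mem h1] at hequ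
      have hb : b = 1 := by linarith
      have ha : a = 0 := by linarith
      rw [ha, hb] at heq
      simpa using heq.symm
  have hWA : W₁ = W' := rho_inj hW₁W'
  have hvS := mem_sd.mp v.2
  have hv1 : (v : V) ∈ W₁ ↔ (v : V) ∈ W := by
    rw [hW₁def, Set.mem_symmDiff]; tauto
  rw [hWA] at hv1
  tauto
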